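/- arXiv:2202.03909 — 10 statements merged into one kernel-verified Lean document; each statement's English description precedes it below -/
import Mathlib

section
/- For σ > 1 and ε ∈ (0,1), the function g(x) = x − x^σ − x^ε + x^{σε} has exactly one zero α in the open interval (0,1). -/
open Real Set

/-- For σ > 1 and ε ∈ (0,1), the function g(x) = x − x^σ − x^ε + x^{σε}
has exactly one zero α in the open interval (0,1). -/
theorem stmt_0 (σ ε : ℝ) (hσ : 1 < σ) (hε : ε ∈ Set.Ioo (0:ℝ) 1) :
    ∃! α : ℝ, α ∈ Set.Ioo (0:ℝ) 1 ∧ α - α ^ σ - α ^ ε + α ^ (σ * ε) = 0 := by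
  obtain ⟨hε0, hε1⟩ := hε
  have hσ0 : (0:ℝ) < σ := lt_trans one_pos hσ
  have hσ1 : (0:ℝ) < σ - 1 := by linarith
  -- the peak of f y = y - y^σ
  set c : ℝ := σ⁻¹ ^ (σ - 1)⁻¹ with hc_def
  have hc0 : 0 < c := Real.rpow_pos_of_pos (by positivity) _
  have hc1 : c < 1 := Real.rpow_lt_one (by positivity) (by
      rw [inv_lt_one_iff₀]; right; exact hσ) (by positivity)
  have hcσ : c ^ (σ - 1) = σ⁻¹ := by
    rw [hc_def, ← Real.rpow_mul (by positivity), inv_mul_cancel₀ hσ1.ne', Real.rpow_one]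
  set a : ℝ := c ^ ε⁻¹ with ha_def
  have ha0 : 0 < a := Real.rpow_pos_of_pos hc0 _
  have haε : a ^ ε = c := by
    rw [ha_def, ← Real.rpow_mul hc0.le, inv_mul_cancel₀ hε0.ne', Real.rpow_one]
  have hac : a < c := by
    have := Real.rpow_lt_rpow_of_exponent_gt hc0 hc1 ((one_lt_inv₀ hε0).mpr hε1)
    rwa [Real.rpow_one] at this
  -- f and its monotonicity
  set f : ℝ → ℝ := fun y => y - y ^ σ with hf_def
  have hfd : ∀ y : ℝ, HasDerivAt f (1 - σ * y ^ (σ - 1)) y := fun y =>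
    (hasDerivAt_id y).sub (Real.hasDerivAt_rpow_const (Or.inr hσ.le))
  have hfc : Continuous f := by
    rw [continuous_iff_continuousAt]; exact fun y => (hfd y).differentiableAt.continuousAt
  have hmono : StrictMonoOn f (Icc 0 c) := by
    apply strictMonoOn_of_deriv_pos (convex_Icc 0 c) hfc.continuousOn
    intro y hy
    rw [interior_Icc] at hy
    rw [(hfd y).deriv]
    have h1 : y ^ (σ - 1) < c ^ (σ - 1) := Real.rpow_lt_rpow hy.1.le hy.2 hσ1
    rw [hcσ] at h1
    have := mul_lt_mul_of_pos_left h1 hσ0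
    rw [mul_inv_cancel₀ hσ0.ne'] at this
    linarith
  have hanti : StrictAntiOn f (Icc c 1) := by
    apply strictAntiOn_of_deriv_neg (convex_Icc c 1) hfc.continuousOn
    intro y hy
    rw [interior_Icc] at hy
    rw [(hfd y).deriv]
    have h1 : c ^ (σ - 1) < y ^ (σ - 1) := Real.rpow_lt_rpow hc0.le hy.1 hσ1
    rw [hcσ] at h1
    have := mul_lt_mul_of_pos_left h1 hσ0
    rw [mul_inv_cancel₀ hσ0.ne'] at this
    linarith
  -- H = f(x^ε) - f(x) = -(g x)
  set H : ℝ → ℝ := fun x => x ^ ε - x ^ (σ * ε) - x + x ^ σ with hH_def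
  have hHf : ∀ x : ℝ, 0 < x → H x = f (x ^ ε) - f x := by
    intro x hx
    have : x ^ (σ * ε) = (x ^ ε) ^ σ := by
      rw [← Real.rpow_mul hx.le, mul_comm]
    simp only [hH_def, hf_def, this]; ring
  have hHd : ∀ x : ℝ, 0 < x →
      HasDerivAt H (ε * x ^ (ε - 1) - σ * ε * x ^ (σ * ε - 1) - 1 + σ * x ^ (σ - 1)) x := by
    intro x hx
    exact (((Real.hasDerivAt_rpow_const (p := ε) (Or.inl hx.ne')).sub
      (Real.hasDerivAt_rpow_const (p := σ * ε) (Or.inl hx.ne'))).sub (hasDerivAt_id x)).add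
      (Real.hasDerivAt_rpow_const (p := σ) (Or.inr hσ.le))
  have hHanti : StrictAntiOn H (Icc a c) := by
    apply strictAntiOn_of_deriv_neg (convex_Icc a c)
    · intro x hx
      exact ((hHd x (lt_of_lt_of_le ha0 hx.1)).differentiableAt.continuousAt).continuousWithinAt
    intro x hx
    rw [interior_Icc] at hx
    have hx0 : 0 < x := lt_trans ha0 hx.1
    rw [(hHd x hx0).deriv]
    -- key rewriting: σ*ε*x^(σε-1) = ε*x^(ε-1) * (σ*(x^ε)^(σ-1))
    have hkey : x ^ (ε - 1) * (x ^ ε) ^ (σ - 1) = x ^ (σ * ε - 1) := by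
      rw [← Real.rpow_mul hx0.le, ← Real.rpow_add hx0]
      ring_nf
    have hP : 0 < ε * x ^ (ε - 1) := by positivity
    -- x < c so σ x^(σ-1) < 1
    have h1 : σ * x ^ (σ - 1) < 1 := by
      have := Real.rpow_lt_rpow hx0.le hx.2 hσ1
      rw [hcσ] at this
      have := mul_lt_mul_of_pos_left this hσ0
      rwa [mul_inv_cancel₀ hσ0.ne'] at this
    -- x^ε > c so σ (x^ε)^(σ-1) > 1
    have h2 : 1 < σ * (x ^ ε) ^ (σ - 1) := by
      have hce : c < x ^ ε := by
        have := Real.rpow_lt_rpow ha0.le hx.1 hε0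
        rwa [haε] at this
      have := Real.rpow_lt_rpow hc0.le hce hσ1
      rw [hcσ] at this
      have := mul_lt_mul_of_pos_left this hσ0
      rwa [mul_inv_cancel₀ hσ0.ne'] at this
    have h3 : σ * ε * x ^ (σ * ε - 1) = (ε * x ^ (ε - 1)) * (σ * (x ^ ε) ^ (σ - 1)) := by
      rw [← hkey]; ring
    rw [h3]
    nlinarith [mul_lt_mul_of_pos_left h2 hP]
  -- any zero of H in (0,1) lies in (a,c)
  have hloc : ∀ x ∈ Ioo (0:ℝ) 1, H x = 0 → x ∈ Ioo a c := by
    rintro x ⟨hx0, hx1⟩ hx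
    have hxε : x < x ^ ε := by
      have := Real.rpow_lt_rpow_of_exponent_gt hx0 hx1 hε1
      rwa [Real.rpow_one] at this
    have hxε1 : x ^ ε < 1 := Real.rpow_lt_one hx0.le hx1 hε0
    rcases le_or_gt x a with h | h
    · exfalso
      have hxc : x ^ ε ≤ c := by
        have := Real.rpow_le_rpow hx0.le h hε0.le
        rwa [haε] at this
      have := hmono ⟨hx0.le, le_trans hxε.le hxc⟩ ⟨(Real.rpow_pos_of_pos hx0 ε).le, hxc⟩ hxε
      rw [hHf x hx0] at hx; linarith
    · rcases lt_or_ge x c with h' | h'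
      · exact ⟨h, h'⟩
      · exfalso
        have hce : c ≤ x ^ ε := le_trans h' hxε.le
        have := hanti ⟨h', hx1.le⟩ ⟨hce, hxε1.le⟩ hxε
        rw [hHf x hx0] at hx; linarith
  -- existence via IVT
  have hHa : 0 < H a := by
    rw [hHf a ha0, haε]
    have := hmono ⟨ha0.le, hac.le⟩ ⟨hc0.le, le_refl c⟩ hac
    linarith
  have hHc : H c < 0 := by
    rw [hHf c hc0]
    have hcε : c < c ^ ε := by
      have := Real.rpow_lt_rpow_of_exponent_gt hc0 hc1 hε1
      rwa [Real.rpow_one] at this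
    have hcε1 : c ^ ε < 1 := Real.rpow_lt_one hc0.le hc1 hε0
    have := hanti ⟨le_refl c, hc1.le⟩ ⟨hcε.le, hcε1.le⟩ hcε
    linarith
  have hHcont : ContinuousOn H (Icc a c) := fun x hx =>
    ((hHd x (lt_of_lt_of_le ha0 hx.1)).differentiableAt.continuousAt).continuousWithinAt
  have hiv := intermediate_value_Ioo' hac.le hHcont
  obtain ⟨α, hαmem, hHα⟩ := hiv ⟨hHc, hHa⟩
  have hα01 : α ∈ Ioo (0:ℝ) 1 := ⟨lt_trans ha0 hαmem.1, lt_trans hαmem.2 hc1⟩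
  refine ⟨α, ⟨hα01, ?_⟩, ?_⟩
  · have : H α = 0 := hHα
    simp only [hH_def] at this
    linarith
  · rintro β ⟨hβ01, hβg⟩
    have hHβ : H β = 0 := by simp only [hH_def]; linarith
    have hβmem := hloc β hβ01 hHβ
    exact hHanti.injOn (Ioo_subset_Icc_self hβmem) (Ioo_subset_Icc_self hαmem)
      (by rw [hHβ, hHα])
end

section
/- For σ > 1, ε ∈ (0,1), and α the unique zero of g(x) = x − x^σ − x^ε + x^{σε} in (0,1), one has g(x) < 0 for 0 < x < α and g(x) > 0 for α < x < 1. -/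
open Set Filter Topology

private lemma rpow_tendsto_zero {p : ℝ} (hp : 0 < p) :
    Tendsto (fun x : ℝ => x ^ p) (𝓝[>] (0:ℝ)) (𝓝 0) := by
  have h := (Real.continuousAt_rpow_const 0 p (Or.inr hp.le)).tendsto
  rw [Real.zero_rpow hp.ne'] at h
  exact h.mono_left nhdsWithin_le_nhds

/-- If α is the unique zero in (0,1) of g(x) = x − x^σ − x^ε + x^{σε},
then g < 0 on (0,α) and g > 0 on (α,1). -/
theorem stmt_1 (σ ε α : ℝ) (hσ : 1 < σ) (hε : ε ∈ Set.Ioo (0:ℝ) 1)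
    (hα : α ∈ Set.Ioo (0:ℝ) 1) (hroot : α - α ^ σ - α ^ ε + α ^ (σ * ε) = 0)
    (huniq : ∀ x ∈ Set.Ioo (0:ℝ) 1, x - x ^ σ - x ^ ε + x ^ (σ * ε) = 0 → x = α) :
    (∀ x : ℝ, 0 < x → x < α → x - x ^ σ - x ^ ε + x ^ (σ * ε) < 0) ∧
    (∀ x : ℝ, α < x → x < 1 → 0 < x - x ^ σ - x ^ ε + x ^ (σ * ε)) := by
  obtain ⟨hε0, hε1⟩ := hε
  obtain ⟨hα0, hα1⟩ := hα
  set g : ℝ → ℝ := fun x => x - x ^ σ - x ^ ε + x ^ (σ * ε) with hg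
  have hcont : ∀ x : ℝ, 0 < x → ContinuousAt g x := by
    intro x hx
    have hx0 : x ≠ 0 := ne_of_gt hx
    exact ((continuousAt_id.sub (Real.continuousAt_rpow_const x σ (Or.inl hx0))).sub
      (Real.continuousAt_rpow_const x ε (Or.inl hx0))).add
      (Real.continuousAt_rpow_const x (σ*ε) (Or.inl hx0))
  -- a point p ∈ (0, α) with g p < 0
  have hp : ∃ p, p ∈ Ioo (0:ℝ) α ∧ g p < 0 := by
    have h1 : (0:ℝ) < 1 - ε := by linarith
    have h2 : (0:ℝ) < σ - ε := by linarith
    have h3 : (0:ℝ) < σ * ε - ε := by nlinarith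
    have hφ : Tendsto (fun x : ℝ => x ^ (1-ε) - x ^ (σ-ε) - 1 + x ^ (σ*ε-ε))
        (𝓝[>] (0:ℝ)) (𝓝 (-1)) := by
      have := (((rpow_tendsto_zero h1).sub (rpow_tendsto_zero h2)).sub
        (tendsto_const_nhds (x := (1:ℝ)))).add (rpow_tendsto_zero h3)
      simpa using this
    have hev : ∀ᶠ x in 𝓝[>] (0:ℝ),
        x ^ (1-ε) - x ^ (σ-ε) - 1 + x ^ (σ*ε-ε) < 0 :=
      hφ.eventually (gt_mem_nhds (by norm_num : (-1:ℝ) < 0))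
    have hmem : ∀ᶠ x in 𝓝[>] (0:ℝ), x ∈ Ioo (0:ℝ) α :=
      Ioo_mem_nhdsGT_of_mem ⟨le_refl 0, hα0⟩
    obtain ⟨p, hpφ, hpmem⟩ := (hev.and hmem).exists
    refine ⟨p, hpmem, ?_⟩
    have hp0 : (0:ℝ) < p := hpmem.1
    have hfac : g p = p ^ ε * (p ^ (1-ε) - p ^ (σ-ε) - 1 + p ^ (σ*ε-ε)) := by
      have e1 : ε + (1-ε) = 1 := by ring
      have e2 : ε + (σ-ε) = σ := by ring
      have e3 : ε + (σ*ε-ε) = σ*ε := by ring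
      rw [hg, mul_add, mul_sub, mul_sub, mul_one, ← Real.rpow_add hp0,
        ← Real.rpow_add hp0, ← Real.rpow_add hp0, e1, e2, e3, Real.rpow_one]
    rw [hfac]
    exact mul_neg_of_pos_of_neg (Real.rpow_pos_of_pos hp0 ε) hpφ
  -- a point q ∈ (α, 1) with g q > 0
  have hq : ∃ q, q ∈ Ioo α (1:ℝ) ∧ 0 < g q := by
    have hd : HasDerivAt g ((1-σ)*(1-ε)) 1 := by
      have h1 : HasDerivAt (fun x : ℝ => x ^ σ) (σ * (1:ℝ) ^ (σ-1)) 1 :=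
        Real.hasDerivAt_rpow_const (Or.inl one_ne_zero)
      have h2 : HasDerivAt (fun x : ℝ => x ^ ε) (ε * (1:ℝ) ^ (ε-1)) 1 :=
        Real.hasDerivAt_rpow_const (Or.inl one_ne_zero)
      have h3 : HasDerivAt (fun x : ℝ => x ^ (σ*ε)) ((σ*ε) * (1:ℝ) ^ (σ*ε-1)) 1 :=
        Real.hasDerivAt_rpow_const (Or.inl one_ne_zero)
      have h := (((hasDerivAt_id (1:ℝ)).sub h1).sub h2).add h3
      convert h using 1
      · rfl
      · rfl
      · rfl
      rw [Real.one_rpow, Real.one_rpow, Real.one_rpow]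
      ring
    rw [hasDerivAt_iff_tendsto_slope] at hd
    have hneg : (1-σ)*(1-ε) < 0 := mul_neg_of_neg_of_pos (by linarith) (by linarith)
    have hev : ∀ᶠ y in 𝓝[≠] (1:ℝ), slope g 1 y < 0 :=
      hd.eventually (gt_mem_nhds hneg)
    have hsub : 𝓝[<] (1:ℝ) ≤ 𝓝[≠] (1:ℝ) :=
      nhdsWithin_mono 1 (fun y hy => ne_of_lt hy)
    have hev' : ∀ᶠ y in 𝓝[<] (1:ℝ), slope g 1 y < 0 := hsub hev
    have hmem : ∀ᶠ y in 𝓝[<] (1:ℝ), y ∈ Ioo α (1:ℝ) :=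
      Ioo_mem_nhdsLT_of_mem ⟨hα1, le_refl 1⟩
    obtain ⟨q, hqs, hqmem⟩ := (hev'.and hmem).exists
    refine ⟨q, hqmem, ?_⟩
    have hg1 : g 1 = 0 := by simp [hg, Real.one_rpow]
    have hslope : slope g 1 q = g q / (q - 1) := by
      rw [slope_def_field, hg1]
      ring_nf
    rw [hslope] at hqs
    rcases div_neg_iff.mp hqs with ⟨hgq, hq1⟩ | ⟨hgq, hq1⟩
    · exact hgq
    · exfalso; linarith [hqmem.2]
  obtain ⟨p, hpmem, hpneg⟩ := hp
  obtain ⟨q, hqmem, hqpos⟩ := hq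
  constructor
  · intro x hx0 hxα
    by_contra hcon
    push_neg at hcon
    -- IVT between p and x inside (0, α)
    have hsub : uIcc p x ⊆ Ioo (0:ℝ) α :=
      (ordConnected_Ioo).uIcc_subset hpmem ⟨hx0, hxα⟩
    have hcont' : ContinuousOn g (uIcc p x) := fun y hy =>
      (hcont y (hsub hy).1).continuousWithinAt
    have h0 : (0:ℝ) ∈ uIcc (g p) (g x) := by
      rw [mem_uIcc]; left; exact ⟨le_of_lt hpneg, hcon⟩
    obtain ⟨z, hz, hgz⟩ := intermediate_value_uIcc hcont' h0
    have hzmem := hsub hz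
    have := huniq z ⟨hzmem.1, lt_trans hzmem.2 hα1⟩ hgz
    exact absurd this (ne_of_lt hzmem.2)
  · intro x hxα hx1
    by_contra hcon
    push_neg at hcon
    have hsub : uIcc q x ⊆ Ioo α (1:ℝ) :=
      (ordConnected_Ioo).uIcc_subset hqmem ⟨hxα, hx1⟩
    have hcont' : ContinuousOn g (uIcc q x) := fun y hy =>
      (hcont y (lt_trans hα0 (hsub hy).1)).continuousWithinAt
    have h0 : (0:ℝ) ∈ uIcc (g q) (g x) := by
      rw [mem_uIcc]; right; exact ⟨hcon, le_of_lt hqpos⟩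
    obtain ⟨z, hz, hgz⟩ := intermediate_value_uIcc hcont' h0
    have hzmem := hsub hz
    have := huniq z ⟨lt_trans hα0 hzmem.1, hzmem.2⟩ hgz
    exact absurd this (ne_of_gt hzmem.1)
end

section
/- For σ > 1 and ε ∈ (0,1), the equation x^{σ−1} + x^{ε−1} − x^{σε−1} = 1 has exactly one solution x in (0,1). -/
/-- For σ > 1, ε ∈ (0,1), the equation x^{σ−1} + x^{ε−1} − x^{σε−1} = 1
has exactly one solution in (0,1). -/
theorem stmt_4 (σ ε : ℝ) (hσ : 1 < σ) (hε : ε ∈ Set.Ioo (0:ℝ) 1) :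
    ∃! x : ℝ, x ∈ Set.Ioo (0:ℝ) 1 ∧
      x ^ (σ - 1) + x ^ (ε - 1) - x ^ (σ * ε - 1) = 1 := by
  obtain ⟨hε0, hε1⟩ := hε
  have hσ0 : (0:ℝ) < σ := lt_trans one_pos hσ
  have hσ1 : (0:ℝ) < σ - 1 := sub_pos.2 hσ
  set F : ℝ → ℝ := fun y => y - y ^ σ with hFdef
  set c : ℝ := (1/σ) ^ (1/(σ-1)) with hcdef
  have hc0 : 0 < c := Real.rpow_pos_of_pos (by positivity) _
  have hc1 : c < 1 := by
    apply Real.rpow_lt_one (by positivity) _ (by positivity)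
    rw [div_lt_one hσ0]; exact hσ
  have hcσ : c ^ (σ - 1) = 1/σ := by
    rw [hcdef, ← Real.rpow_mul (by positivity), one_div (σ-1),
      inv_mul_cancel₀ hσ1.ne', Real.rpow_one]
  have hFderiv : ∀ y : ℝ, y ≠ 0 → HasDerivAt F (1 - σ * y ^ (σ-1)) y := by
    intro y hy
    exact (hasDerivAt_id y).sub (Real.hasDerivAt_rpow_const (Or.inl hy))
  have hFcontAt : ∀ y : ℝ, y ≠ 0 → ContinuousAt F y := by
    intro y hy
    exact continuousAt_id.sub (Real.continuousAt_rpow_const y σ (Or.inl hy))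
  -- F strictly increasing on (0, c]
  have Fmono : StrictMonoOn F (Set.Ioc 0 c) := by
    apply strictMonoOn_of_deriv_pos (convex_Ioc 0 c)
    · exact fun y hy => (hFcontAt y hy.1.ne').continuousWithinAt
    · intro y hy
      rw [interior_Ioc] at hy
      rw [(hFderiv y hy.1.ne').deriv]
      have h1 : y ^ (σ-1) < c ^ (σ-1) := Real.rpow_lt_rpow hy.1.le hy.2 hσ1
      rw [hcσ] at h1
      have h2 : σ * y ^ (σ-1) < σ * (1/σ) := (mul_lt_mul_iff_right₀ hσ0).2 h1
      rw [mul_one_div_cancel hσ0.ne'] at h2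
      linarith
  -- F strictly decreasing on [c, 1)
  have Fanti : StrictAntiOn F (Set.Ico c 1) := by
    apply strictAntiOn_of_deriv_neg (convex_Ico c 1)
    · exact fun y hy => (hFcontAt y (lt_of_lt_of_le hc0 hy.1).ne').continuousWithinAt
    · intro y hy
      rw [interior_Ico] at hy
      rw [(hFderiv y (lt_trans hc0 hy.1).ne').deriv]
      have h1 : c ^ (σ-1) < y ^ (σ-1) := Real.rpow_lt_rpow hc0.le hy.1 hσ1
      rw [hcσ] at h1
      have h2 : σ * (1/σ) < σ * y ^ (σ-1) := (mul_lt_mul_iff_right₀ hσ0).2 h1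
      rw [mul_one_div_cancel hσ0.ne'] at h2
      linarith
  set a : ℝ := c ^ (1/ε) with hadef
  have ha0 : 0 < a := Real.rpow_pos_of_pos hc0 _
  have haε : a ^ ε = c := by
    rw [hadef, ← Real.rpow_mul hc0.le, one_div, inv_mul_cancel₀ hε0.ne', Real.rpow_one]
  have h1ε : (1:ℝ) < 1/ε := by
    rw [lt_div_iff₀ hε0, one_mul]; exact hε1
  have hac : a < c := by
    have := Real.rpow_lt_rpow_of_exponent_gt hc0 hc1 h1ε
    rwa [Real.rpow_one] at this
  set G : ℝ → ℝ := fun x => F x - F (x ^ ε) with hGdef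
  -- G is strictly monotone on (a, c) — in fact pointwise comparison on [a, c]
  have hGmono : ∀ x ∈ Set.Icc a c, ∀ y ∈ Set.Icc a c, x < y → G x < G y := by
    intro x hx y hy hxy
    have hx0 : 0 < x := lt_of_lt_of_le ha0 hx.1
    have hy0 : 0 < y := lt_of_lt_of_le ha0 hy.1
    have hFxy : F x < F y := Fmono ⟨hx0, hx.2⟩ ⟨hy0, hy.2⟩ hxy
    -- x^ε, y^ε ∈ [c, 1)
    have hxe : c ≤ x ^ ε := by
      rw [← haε]; exact Real.rpow_le_rpow ha0.le hx.1 hε0.le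
    have hye : c ≤ y ^ ε := by
      rw [← haε]; exact Real.rpow_le_rpow ha0.le hy.1 hε0.le
    have hxe1 : x ^ ε < 1 :=
      Real.rpow_lt_one hx0.le (lt_of_le_of_lt hx.2 hc1) hε0
    have hye1 : y ^ ε < 1 :=
      Real.rpow_lt_one hy0.le (lt_of_le_of_lt hy.2 hc1) hε0
    have hxye : x ^ ε < y ^ ε := Real.rpow_lt_rpow hx0.le hxy hε0
    have hFe : F (y ^ ε) < F (x ^ ε) := Fanti ⟨hxe, hxe1⟩ ⟨hye, hye1⟩ hxye
    simp only [hGdef]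
    linarith
  have hGa : G a < 0 := by
    have : F a < F c := Fmono ⟨ha0, hac.le⟩ ⟨hc0, le_refl c⟩ hac
    simp only [hGdef, haε]
    linarith
  have hGc : 0 < G c := by
    have hcce : c < c ^ ε := by
      have := Real.rpow_lt_rpow_of_exponent_gt hc0 hc1 hε1
      rwa [Real.rpow_one] at this
    have hce1 : c ^ ε < 1 := Real.rpow_lt_one hc0.le hc1 hε0
    have : F (c ^ ε) < F c := Fanti ⟨le_refl c, hc1⟩ ⟨hcce.le, hce1⟩ hcce
    simp only [hGdef]
    linarith
  have hGcont : ContinuousOn G (Set.Icc a c) := by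
    intro x hx
    have hx0 : 0 < x := lt_of_lt_of_le ha0 hx.1
    have h1 : ContinuousAt (fun x : ℝ => x ^ ε) x :=
      Real.continuousAt_rpow_const x ε (Or.inl hx0.ne')
    have h2 : ContinuousAt F (x ^ ε) :=
      hFcontAt _ (Real.rpow_pos_of_pos hx0 ε).ne'
    have h3 : ContinuousAt (fun x : ℝ => F (x ^ ε)) x := ContinuousAt.comp (g := F) h2 h1
    exact ((hFcontAt x hx0.ne').sub h3).continuousWithinAt
  obtain ⟨x₀, hx₀mem, hx₀G⟩ := intermediate_value_Ioo hac.le hGcont ⟨hGa, hGc⟩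
  -- every root of G in (0,1) lies in (a, c)
  have hloc : ∀ x : ℝ, x ∈ Set.Ioo (0:ℝ) 1 → G x = 0 → x ∈ Set.Ioo a c := by
    intro x hx hGx
    obtain ⟨hx0, hx1⟩ := hx
    have hxe : x < x ^ ε := by
      have := Real.rpow_lt_rpow_of_exponent_gt hx0 hx1 hε1
      rwa [Real.rpow_one] at this
    have hxc : x < c := by
      by_contra h
      push_neg at h
      have hxe1 : x ^ ε < 1 := Real.rpow_lt_one hx0.le hx1 hε0
      have : F (x ^ ε) < F x :=
        Fanti ⟨h, hx1⟩ ⟨h.trans hxe.le, hxe1⟩ hxe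
      have : 0 < G x := by simp only [hGdef]; linarith
      linarith [hGx]
    have hcxe : c < x ^ ε := by
      by_contra h
      push_neg at h
      have : F x < F (x ^ ε) :=
        Fmono ⟨hx0, hxe.le.trans h⟩ ⟨Real.rpow_pos_of_pos hx0 ε, h⟩ hxe
      have : G x < 0 := by simp only [hGdef]; linarith
      linarith [hGx]
    have hax : a < x := by
      have h1 : c ^ (1/ε) < (x ^ ε) ^ (1/ε) :=
        Real.rpow_lt_rpow hc0.le hcxe (by positivity)
      rwa [← Real.rpow_mul hx0.le, mul_one_div, div_self hε0.ne',
        Real.rpow_one] at h1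
    exact ⟨hax, hxc⟩
  -- equivalence between the original equation and G x = 0
  have heq : ∀ x : ℝ, 0 < x →
      (x ^ (σ - 1) + x ^ (ε - 1) - x ^ (σ * ε - 1) = 1 ↔ G x = 0) := by
    intro x hx0
    have e1 : x ^ σ = x ^ (σ - 1) * x := by
      rw [← Real.rpow_add_one hx0.ne' (σ - 1)]; ring_nf
    have e2 : x ^ ε = x ^ (ε - 1) * x := by
      rw [← Real.rpow_add_one hx0.ne' (ε - 1)]; ring_nf
    have e3 : x ^ (σ * ε) = x ^ (σ * ε - 1) * x := by
      rw [← Real.rpow_add_one hx0.ne' (σ * ε - 1)]; ring_nf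
    have e4 : (x ^ ε) ^ σ = x ^ (σ * ε) := by
      rw [← Real.rpow_mul hx0.le, mul_comm]
    have hGx : G x = x * (1 - (x ^ (σ - 1) + x ^ (ε - 1) - x ^ (σ * ε - 1))) := by
      simp only [hGdef, hFdef, e4]
      rw [e1, e2, e3]; ring
    rw [hGx]
    constructor
    · intro h; rw [h]; ring
    · intro h
      have := mul_eq_zero.1 h
      rcases this with h' | h'
      · exact absurd h' hx0.ne'
      · linarith
  refine ⟨x₀, ⟨⟨lt_trans ha0 hx₀mem.1, lt_trans hx₀mem.2 hc1⟩, ?_⟩, ?_⟩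
  · exact (heq x₀ (lt_trans ha0 hx₀mem.1)).2 hx₀G
  · rintro y ⟨hy, hyeq⟩
    have hyG : G y = 0 := (heq y hy.1).1 hyeq
    have hymem : y ∈ Set.Ioo a c := hloc y hy hyG
    rcases lt_trichotomy y x₀ with h | h | h
    · have := hGmono y ⟨hymem.1.le, hymem.2.le⟩ x₀ ⟨hx₀mem.1.le, hx₀mem.2.le⟩ h
      rw [hyG, hx₀G] at this; exact absurd this (lt_irrefl 0)
    · exact h
    · have := hGmono x₀ ⟨hx₀mem.1.le, hx₀mem.2.le⟩ y ⟨hymem.1.le, hymem.2.le⟩ h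
      rw [hyG, hx₀G] at this; exact absurd this (lt_irrefl 0)
end

section
/- Let N₁, N₂, v, ε, σ, r be positive reals with N₁ + N₂ = 1, v ≤ N₁, ε < 1, σ > 1. Define h₁(Z) = 1 − (N₁−v)e^{−rZ} − N₂ e^{−σrZ} − v e^{−εrZ} − Z on [0,1]. Then h₁ has a zero Z ∈ (0,1) if and only if r > 1/((N₁−v) + σN₂ + εv), and in that case the zero in (0,1) is unique. -/
private noncomputable def fsf (N₁ N₂ v ε σ r Z : ℝ) : ℝ :=
  1 - (N₁ - v) * Real.exp (-r * Z) - N₂ * Real.exp (-σ * r * Z)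
    - v * Real.exp (-ε * r * Z) - Z

private lemma fsf_cont (N₁ N₂ v ε σ r : ℝ) : Continuous (fsf N₁ N₂ v ε σ r) := by
  unfold fsf; fun_prop

private lemma fsf_zero (N₁ N₂ v ε σ r : ℝ) (hsum : N₁ + N₂ = 1) :
    fsf N₁ N₂ v ε σ r 0 = 0 := by
  simp [fsf]; linarith

private lemma fsf_one_neg (N₁ N₂ v ε σ r : ℝ) (hN₂ : 0 < N₂) (hv : 0 < v)
    (hvN : v ≤ N₁) : fsf N₁ N₂ v ε σ r 1 < 0 := by
  have h1 := Real.exp_pos (-r * 1)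
  have h2 := mul_pos hN₂ (Real.exp_pos (-σ * r * 1))
  have h3 := mul_pos hv (Real.exp_pos (-ε * r * 1))
  have h4 : 0 ≤ (N₁ - v) * Real.exp (-r * 1) :=
    mul_nonneg (by linarith) h1.le
  unfold fsf; linarith

private lemma fsf_concave (N₁ N₂ v ε σ r : ℝ) (hN₂ : 0 < N₂) (hv : 0 < v)
    (hvN : v ≤ N₁) (hσpos : 0 < σ) (hr : 0 < r) :
    StrictConcaveOn ℝ Set.univ (fsf N₁ N₂ v ε σ r) := by
  constructor
  · exact convex_univ
  intro x _ y _ hxy a b ha hb hab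
  simp only [smul_eq_mul]
  have key : ∀ k : ℝ, Real.exp (k * (a * x + b * y))
      ≤ a * Real.exp (k * x) + b * Real.exp (k * y) := by
    intro k
    have h := convexOn_exp.2 (Set.mem_univ (k * x)) (Set.mem_univ (k * y))
      ha.le hb.le hab
    simpa [smul_eq_mul, mul_add, mul_comm, mul_left_comm, mul_assoc] using h
  have keys : Real.exp ((-σ * r) * (a * x + b * y))
      < a * Real.exp ((-σ * r) * x) + b * Real.exp ((-σ * r) * y) := by
    have hne : (-σ * r) * x ≠ (-σ * r) * y := by
      intro H
      exact hxy (mul_left_cancel₀ (by nlinarith) H)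
    have h := strictConvexOn_exp.2 (Set.mem_univ ((-σ * r) * x))
      (Set.mem_univ ((-σ * r) * y)) hne ha hb hab
    have harg : (-σ * r) * (a * x + b * y) = a • ((-σ * r) * x) + b • ((-σ * r) * y) := by
      simp [smul_eq_mul]; ring
    rw [harg]
    simpa [smul_eq_mul] using h
  have k1 := mul_le_mul_of_nonneg_left (key (-r)) (by linarith : (0:ℝ) ≤ N₁ - v)
  have k2 := mul_lt_mul_of_pos_left keys hN₂
  have k3 := mul_le_mul_of_nonneg_left (key (-ε * r)) hv.le
  unfold fsf
  have hx1 : -r * (a * x + b * y) = (-r) * (a * x + b * y) := by ring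
  nlinarith [k1, k2, k3, hab]

private lemma fsf_uniq (N₁ N₂ v ε σ r : ℝ) (hN₂ : 0 < N₂) (hv : 0 < v)
    (hvN : v ≤ N₁) (hσpos : 0 < σ) (hr : 0 < r) (hsum : N₁ + N₂ = 1) :
    ∀ z ∈ Set.Ioo (0:ℝ) 1, fsf N₁ N₂ v ε σ r z = 0 →
    ∀ w ∈ Set.Ioo (0:ℝ) 1, fsf N₁ N₂ v ε σ r w = 0 → z = w := by
  have hconc := fsf_concave N₁ N₂ v ε σ r hN₂ hv hvN hσpos hr
  have key : ∀ z w : ℝ, 0 < z → z < w → fsf N₁ N₂ v ε σ r w = 0 →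
      0 < fsf N₁ N₂ v ε σ r z := by
    intro z w hz hzw hw
    have hw0 : 0 < w := hz.trans hzw
    have hp : 0 < (w - z) / w := div_pos (by linarith) hw0
    have hq : 0 < z / w := div_pos hz hw0
    have hpq : (w - z) / w + z / w = 1 := by field_simp; ring
    have h := hconc.2 (Set.mem_univ (0:ℝ)) (Set.mem_univ w)
      (by linarith : (0:ℝ) ≠ w) hp hq hpq
    have harg : ((w - z) / w) • (0:ℝ) + ((z / w)) • w = z := by
      simp only [smul_eq_mul, mul_zero, zero_add]
      field_simp
    rw [harg] at h
    rw [fsf_zero N₁ N₂ v ε σ r hsum, hw] at h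
    simpa using h
  intro z hz hfz w hw hfw
  rcases lt_trichotomy z w with h | h | h
  · exact absurd hfz (ne_of_gt (key z w hz.1 h hfw))
  · exact h
  · exact absurd hfw (ne_of_gt (key w z hw.1 h hfz))

private lemma fsf_deriv (N₁ N₂ v ε σ r : ℝ) :
    HasDerivAt (fsf N₁ N₂ v ε σ r) (r * ((N₁ - v) + σ * N₂ + ε * v) - 1) 0 := by
  have e1 : HasDerivAt (fun z : ℝ => (N₁ - v) * Real.exp (-r * z))
      ((N₁ - v) * (Real.exp (-r * 0) * (-r * 1))) 0 :=
    (((hasDerivAt_id 0).const_mul (-r)).exp).const_mul _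
  have e2 : HasDerivAt (fun z : ℝ => N₂ * Real.exp (-σ * r * z))
      (N₂ * (Real.exp (-σ * r * 0) * (-σ * r * 1))) 0 :=
    (((hasDerivAt_id 0).const_mul (-σ * r)).exp).const_mul _
  have e3 : HasDerivAt (fun z : ℝ => v * Real.exp (-ε * r * z))
      (v * (Real.exp (-ε * r * 0) * (-ε * r * 1))) 0 :=
    (((hasDerivAt_id 0).const_mul (-ε * r)).exp).const_mul _
  have h := ((((hasDerivAt_const (0:ℝ) (1:ℝ)).sub e1).sub e2).sub e3).sub
    (hasDerivAt_id 0)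
  refine h.congr_deriv ?_
  simp only [mul_zero, neg_zero, Real.exp_zero]
  ring

private lemma fsf_exists (N₁ N₂ v ε σ r : ℝ) (hN₂ : 0 < N₂) (hv : 0 < v)
    (hvN : v ≤ N₁) (hσpos : 0 < σ) (hε : 0 < ε) (hr : 0 < r) (hsum : N₁ + N₂ = 1)
    (hthr : 1 < r * ((N₁ - v) + σ * N₂ + ε * v)) :
    ∃ Z ∈ Set.Ioo (0:ℝ) 1, fsf N₁ N₂ v ε σ r Z = 0 := by
  have hd := fsf_deriv N₁ N₂ v ε σ r
  rw [hasDerivAt_iff_tendsto_slope] at hd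
  have hdpos : 0 < r * ((N₁ - v) + σ * N₂ + ε * v) - 1 := by linarith
  have hev : ∀ᶠ z in nhdsWithin 0 {(0:ℝ)}ᶜ, 0 < slope (fsf N₁ N₂ v ε σ r) 0 z :=
    hd.eventually (eventually_gt_nhds hdpos)
  have hmono : nhdsWithin (0:ℝ) (Set.Ioo 0 1) ≤ nhdsWithin 0 {(0:ℝ)}ᶜ :=
    nhdsWithin_mono 0 (fun x hx => ne_of_gt hx.1)
  have hev2 : ∀ᶠ z in nhdsWithin (0:ℝ) (Set.Ioo 0 1),
      0 < slope (fsf N₁ N₂ v ε σ r) 0 z ∧ z ∈ Set.Ioo (0:ℝ) 1 :=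
    (hev.filter_mono hmono).and self_mem_nhdsWithin
  have hnb : (nhdsWithin (0:ℝ) (Set.Ioo 0 1)).NeBot := by
    apply IsGLB.nhdsWithin_neBot
    · exact isGLB_Ioo zero_lt_one
    · exact Set.nonempty_Ioo.mpr zero_lt_one
  obtain ⟨z, hsl, hzmem⟩ := hev2.exists
  have hfz : 0 < fsf N₁ N₂ v ε σ r z := by
    have : slope (fsf N₁ N₂ v ε σ r) 0 z
        = fsf N₁ N₂ v ε σ r z / z := by
      simp [slope, fsf_zero N₁ N₂ v ε σ r hsum]
      ring
    rw [this] at hsl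
    have := mul_pos hsl hzmem.1
    rwa [div_mul_cancel₀] at this
    exact ne_of_gt hzmem.1
  have hf1 := fsf_one_neg N₁ N₂ v ε σ r hN₂ hv hvN
  have hsub : Set.Ioo (fsf N₁ N₂ v ε σ r 1) (fsf N₁ N₂ v ε σ r z)
      ⊆ fsf N₁ N₂ v ε σ r '' Set.Ioo z 1 :=
    intermediate_value_Ioo' hzmem.2.le (fsf_cont N₁ N₂ v ε σ r).continuousOn
  obtain ⟨Z, hZmem, hZ⟩ := hsub ⟨hf1, hfz⟩
  exact ⟨Z, ⟨hzmem.1.trans hZmem.1, hZmem.2⟩, hZ⟩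

private lemma fsf_fwd (N₁ N₂ v ε σ r : ℝ) (hN₂ : 0 < N₂) (hv : 0 < v)
    (hvN : v ≤ N₁) (hσpos : 0 < σ) (hε : 0 < ε) (hr : 0 < r) (hsum : N₁ + N₂ = 1)
    {Z : ℝ} (hZ : Z ∈ Set.Ioo (0:ℝ) 1) (h0 : fsf N₁ N₂ v ε σ r Z = 0) :
    1 < r * ((N₁ - v) + σ * N₂ + ε * v) := by
  obtain ⟨hZ0, hZ1⟩ := hZ
  have b1 : 1 - r * Z ≤ Real.exp (-r * Z) := by
    have := Real.add_one_le_exp (-r * Z); linarith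
  have b2 : 1 - σ * r * Z < Real.exp (-σ * r * Z) := by
    have := Real.add_one_lt_exp (x := -σ * r * Z) (ne_of_lt (by nlinarith [mul_pos (mul_pos hσpos hr) hZ0])); linarith
  have b3 : 1 - ε * r * Z ≤ Real.exp (-ε * r * Z) := by
    have := Real.add_one_le_exp (-ε * r * Z); linarith
  have k1 := mul_le_mul_of_nonneg_left b1 (by linarith : (0:ℝ) ≤ N₁ - v)
  have k2 := mul_lt_mul_of_pos_left b2 hN₂
  have k3 := mul_le_mul_of_nonneg_left b3 hv.le
  unfold fsf at h0
  have hkey : 0 < Z * (r * ((N₁ - v) + σ * N₂ + ε * v) - 1) := by nlinarith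
  by_contra hc
  push_neg at hc
  nlinarith [hkey, mul_nonneg hZ0.le (sub_nonneg.mpr hc)]

/-- Existence/uniqueness of a nontrivial solution of the final size equation
when all vaccine is allocated to group 1, iff r exceeds the threshold r₁. -/
theorem stmt_5 (N₁ N₂ v ε σ r : ℝ) (hN₁ : 0 < N₁) (hN₂ : 0 < N₂) (hv : 0 < v)
    (hε : 0 < ε) (hσpos : 0 < σ) (hr : 0 < r) (hsum : N₁ + N₂ = 1)
    (hvN : v ≤ N₁) (hε1 : ε < 1) (hσ : 1 < σ) :
    ((∃ Z ∈ Set.Ioo (0:ℝ) 1,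
        1 - (N₁ - v) * Real.exp (-r * Z) - N₂ * Real.exp (-σ * r * Z)
          - v * Real.exp (-ε * r * Z) - Z = 0) ↔
      1 / ((N₁ - v) + σ * N₂ + ε * v) < r) ∧
    (1 / ((N₁ - v) + σ * N₂ + ε * v) < r →
      ∃! Z : ℝ, Z ∈ Set.Ioo (0:ℝ) 1 ∧
        1 - (N₁ - v) * Real.exp (-r * Z) - N₂ * Real.exp (-σ * r * Z)
          - v * Real.exp (-ε * r * Z) - Z = 0) := by
  have hD : 0 < (N₁ - v) + σ * N₂ + ε * v := by nlinarith
  have hiff : 1 / ((N₁ - v) + σ * N₂ + ε * v) < r ↔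
      1 < r * ((N₁ - v) + σ * N₂ + ε * v) := div_lt_iff₀ hD
  constructor
  · constructor
    · rintro ⟨Z, hZmem, hZ⟩
      exact hiff.mpr (fsf_fwd N₁ N₂ v ε σ r hN₂ hv hvN hσpos hε hr hsum hZmem hZ)
    · intro h
      exact fsf_exists N₁ N₂ v ε σ r hN₂ hv hvN hσpos hε hr hsum (hiff.mp h)
  · intro h
    obtain ⟨Z, hZmem, hZ⟩ :=
      fsf_exists N₁ N₂ v ε σ r hN₂ hv hvN hσpos hε hr hsum (hiff.mp h)
    refine ⟨Z, ⟨hZmem, hZ⟩, ?_⟩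
    rintro W ⟨hWmem, hW⟩
    exact fsf_uniq N₁ N₂ v ε σ r hN₂ hv hvN hσpos hr hsum W hWmem hW Z hZmem hZ
end

section
/- Under σ > 1, ε ∈ (0,1), 0 < v < min(N₁,N₂), N₁+N₂=1, one has 1/((N₁−v) + σN₂ + εv) < 1/(N₁ + σ(N₂−v) + σεv); i.e., the epidemic threshold r₁ for vaccinating group 1 is strictly less than the threshold r₂ for vaccinating group 2. -/
/-- The epidemic threshold for vaccinating group 1 is strictly below
the threshold for vaccinating group 2: r₁ < r₂. -/
theorem stmt_7 (σ ε N₁ N₂ v : ℝ) (hσ : 1 < σ) (hε : ε ∈ Set.Ioo (0:ℝ) 1)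
    (hN₁ : 0 < N₁) (hN₂ : 0 < N₂) (hsum : N₁ + N₂ = 1)
    (hv : 0 < v) (hvmin : v < min N₁ N₂) :
    1 / ((N₁ - v) + σ * N₂ + ε * v) < 1 / (N₁ + σ * (N₂ - v) + σ * ε * v) := by
  obtain ⟨hε0, hε1⟩ := hε
  have hv2 : v < N₂ := lt_of_lt_of_le hvmin (min_le_right _ _)
  have hpos : 0 < N₁ + σ * (N₂ - v) + σ * ε * v := by
    have h1 : 0 < σ * (N₂ - v) := mul_pos (by linarith) (by linarith)
    have h2 : 0 < σ * ε * v := mul_pos (mul_pos (by linarith) hε0) hv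
    linarith
  have hlt : N₁ + σ * (N₂ - v) + σ * ε * v < (N₁ - v) + σ * N₂ + ε * v := by
    nlinarith [mul_pos hv (mul_pos (sub_pos.2 hσ) (sub_pos.2 hε1))]
  exact one_div_lt_one_div_of_lt hpos hlt
end

section
/- Let σ > 1, ε ∈ (0,1), and let α ∈ (0,1) satisfy α − α^σ − α^ε + α^{σε} = 0; set κ = ln(1/α). Fix N₁, N₂ > 0 with N₁+N₂=1, v > 0, and r > 0. Define f₁(Z) = 1 − (N₁−v)e^{−rZ} − N₂ e^{−σrZ} − v e^{−εrZ} and f₂(Z) = 1 − N₁ e^{−rZ} − (N₂−v)e^{−σrZ} − v e^{−σεrZ}. Then f₁(Z) > f₂(Z) for 0 < Z < κ/r and f₂(Z) > f₁(Z) for Z > κ/r. -/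
open Real Set

lemma slope_exp {s₁ s₂ : ℝ} (h1 : 0 < s₁) (h12 : s₁ < s₂) :
    s₂ * (Real.exp s₁ - 1) < s₁ * (Real.exp s₂ - 1) := by
  have h2 : 0 < s₂ := h1.trans h12
  have hb : (0:ℝ) < s₁ / s₂ := by positivity
  have ha : (0:ℝ) < 1 - s₁ / s₂ := by
    rw [sub_pos, div_lt_one h2]; exact h12
  have hc := strictConvexOn_exp.2 (mem_univ (0:ℝ)) (mem_univ s₂) (by linarith : (0:ℝ) ≠ s₂)
      ha hb (by ring)
  simp only [smul_eq_mul, mul_zero, zero_add, Real.exp_zero, mul_one] at hc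
  rw [div_mul_cancel₀ _ (ne_of_gt h2)] at hc
  have key := mul_lt_mul_of_pos_right hc h2
  have heq : (1 - s₁/s₂ + s₁/s₂ * Real.exp s₂) * s₂ = s₂ - s₁ + s₁ * Real.exp s₂ := by
    field_simp
  rw [heq] at key
  nlinarith [key]

lemma one_lt_exp' {s : ℝ} (h : 0 < s) : (1:ℝ) < Real.exp s := by
  have := Real.exp_lt_exp.mpr h; simpa using this

lemma A_anti {s₁ s₂ : ℝ} (h1 : 0 < s₁) (h12 : s₁ < s₂) :
    s₂ / (Real.exp s₂ - 1) < s₁ / (Real.exp s₁ - 1) := by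
  have e1 : (0:ℝ) < Real.exp s₁ - 1 := by linarith [one_lt_exp' h1]
  have e2 : (0:ℝ) < Real.exp s₂ - 1 := by linarith [one_lt_exp' (h1.trans h12)]
  rw [div_lt_div_iff₀ e2 e1]
  nlinarith [slope_exp h1 h12]


lemma hasDeriv_psi (σ t : ℝ) : HasDerivAt (fun t => Real.exp (-t) - Real.exp (-(σ*t)))
    (σ * Real.exp (-(σ*t)) - Real.exp (-t)) t := by
  have h1 : HasDerivAt (fun t : ℝ => Real.exp (-t)) (-Real.exp (-t)) t := by
    exact ((Real.hasDerivAt_exp (-t)).comp t ((hasDerivAt_id t).neg)).congr_deriv (by simp)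
  have h2 : HasDerivAt (fun t : ℝ => Real.exp (-(σ*t))) (-σ * Real.exp (-(σ*t))) t := by
    have hi : HasDerivAt (fun t : ℝ => -(σ*t)) (-σ) t := by
      exact (((hasDerivAt_id t).const_mul σ).neg).congr_deriv (by simp)
    exact ((Real.hasDerivAt_exp (-(σ*t))).comp t hi).congr_deriv (by ring : _ = -σ * Real.exp (-(σ*t)))
  have := h1.sub h2
  exact this.congr_deriv (by ring)

lemma one_lt_exp'' {s : ℝ} (h : 0 < s) : (1:ℝ) < Real.exp s := by
  have := Real.exp_lt_exp.mpr h; simpa using this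

lemma psi_pos {σ t : ℝ} (hσ : 1 < σ) (ht : 0 < t) :
    0 < Real.exp (-t) - Real.exp (-(σ*t)) := by
  have : -(σ*t) < -t := by nlinarith
  have := Real.exp_lt_exp.mpr this
  linarith

lemma q_eq {σ t : ℝ} (hσ : 1 < σ) (ht : 0 < t) :
    (σ * Real.exp (-(σ*t)) - Real.exp (-t)) / (Real.exp (-t) - Real.exp (-(σ*t)))
      = (σ-1)/(Real.exp ((σ-1)*t) - 1) - 1 := by
  have hu : (1:ℝ) < Real.exp ((σ-1)*t) := one_lt_exp'' (by nlinarith)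
  have hE : (0:ℝ) < Real.exp (-t) := Real.exp_pos _
  have hs : Real.exp (-(σ*t)) = Real.exp (-t) / Real.exp ((σ-1)*t) := by
    rw [eq_div_iff (by positivity), ← Real.exp_add]; ring_nf
  rw [hs]
  set E := Real.exp (-t) with hEdef
  set u := Real.exp ((σ-1)*t) with hudef
  have hu0 : (0:ℝ) < u := by linarith
  have hu1 : u - 1 ≠ 0 := by intro h; have := sub_eq_zero.mp h; linarith
  have hden : E - E / u ≠ 0 := ne_of_gt (sub_pos.mpr (div_lt_self hE hu))
  have hx : -E + E * u ≠ 0 := ne_of_gt (by nlinarith)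
  field_simp
  ring

lemma tq_anti {σ a b : ℝ} (hσ : 1 < σ) (ha : 0 < a) (hab : a < b) :
    b * ((σ * Real.exp (-(σ*b)) - Real.exp (-b)) / (Real.exp (-b) - Real.exp (-(σ*b))))
      < a * ((σ * Real.exp (-(σ*a)) - Real.exp (-a)) / (Real.exp (-a) - Real.exp (-(σ*a)))) := by
  rw [q_eq hσ (ha.trans hab), q_eq hσ ha]
  have hA := A_anti (s₁ := (σ-1)*a) (s₂ := (σ-1)*b) (by nlinarith) (by nlinarith)
  have h1 : ∀ c X : ℝ, c * ((σ-1)/X - 1) = ((σ-1)*c)/X - c := fun c X => by ring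
  rw [h1 b, h1 a]
  linarith [hA]

lemma L_hasDeriv {σ ε t : ℝ} (hσ : 1 < σ) (hε0 : 0 < ε) (ht : 0 < t) :
    HasDerivAt (fun t => Real.log (Real.exp (-t) - Real.exp (-(σ*t)))
        - Real.log (Real.exp (-(ε*t)) - Real.exp (-(σ*(ε*t)))))
      ((σ * Real.exp (-(σ*t)) - Real.exp (-t)) / (Real.exp (-t) - Real.exp (-(σ*t)))
        - ε * ((σ * Real.exp (-(σ*(ε*t))) - Real.exp (-(ε*t))) / (Real.exp (-(ε*t)) - Real.exp (-(σ*(ε*t)))))) t := by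
  have hεt : 0 < ε * t := mul_pos hε0 ht
  have hψ := hasDeriv_psi σ t
  have hlog1 := (Real.hasDerivAt_log (ne_of_gt (psi_pos hσ ht))).comp t hψ
  have hlin : HasDerivAt (fun t : ℝ => ε * t) ε t := by
    simpa using (hasDerivAt_id t).const_mul ε
  have hψε := (hasDeriv_psi σ (ε*t)).comp t hlin
  have hlog2 := (Real.hasDerivAt_log (ne_of_gt (psi_pos hσ hεt))).comp t hψε
  have h := hlog1.sub hlog2
  exact h.congr_deriv (by ring)

lemma psi_compare {σ ε : ℝ} (hσ : 1 < σ) (hε0 : 0 < ε) (hε1 : ε < 1) {T : ℝ} (hT : 0 < T)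
    (hroot : Real.exp (-T) - Real.exp (-(σ*T)) = Real.exp (-(ε*T)) - Real.exp (-(σ*(ε*T)))) :
    (∀ t, 0 < t → t < T →
      Real.exp (-(ε*t)) - Real.exp (-(σ*(ε*t))) < Real.exp (-t) - Real.exp (-(σ*t))) ∧
    (∀ t, T < t →
      Real.exp (-t) - Real.exp (-(σ*t)) < Real.exp (-(ε*t)) - Real.exp (-(σ*(ε*t)))) := by
  set L := fun t => Real.log (Real.exp (-t) - Real.exp (-(σ*t)))
      - Real.log (Real.exp (-(ε*t)) - Real.exp (-(σ*(ε*t)))) with hL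
  have hanti : StrictAntiOn L (Set.Ioi 0) := by
    apply strictAntiOn_of_deriv_neg (convex_Ioi 0)
    · exact fun x hx => (L_hasDeriv hσ hε0 hx).continuousAt.continuousWithinAt
    · intro x hx
      rw [interior_Ioi] at hx
      rw [(L_hasDeriv hσ hε0 hx).deriv]
      have hεx : 0 < ε * x := mul_pos hε0 hx
      have htq := tq_anti hσ hεx (by nlinarith : ε * x < x)
      set Q1 := (σ * Real.exp (-(σ*x)) - Real.exp (-x)) / (Real.exp (-x) - Real.exp (-(σ*x)))
      set Q2 := (σ * Real.exp (-(σ*(ε*x))) - Real.exp (-(ε*x))) / (Real.exp (-(ε*x)) - Real.exp (-(σ*(ε*x))))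
      have : x * Q1 < x * (ε * Q2) := by nlinarith [htq]
      have := (mul_lt_mul_iff_right₀ hx).mp this
      linarith
  have hLT : L T = 0 := by simp only [hL, hroot, sub_self]
  constructor
  · intro t ht htT
    have h := hanti (Set.mem_Ioi.mpr ht) (Set.mem_Ioi.mpr hT) htT
    rw [hLT] at h
    have h2 : Real.log (Real.exp (-(ε*t)) - Real.exp (-(σ*(ε*t)))) <
        Real.log (Real.exp (-t) - Real.exp (-(σ*t))) := by
      simp only [hL] at h; linarith
    exact (Real.log_lt_log_iff (psi_pos hσ (mul_pos hε0 ht)) (psi_pos hσ ht)).mp h2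
  · intro t hTt
    have ht : 0 < t := hT.trans hTt
    have h := hanti (Set.mem_Ioi.mpr hT) (Set.mem_Ioi.mpr ht) hTt
    rw [hLT] at h
    have h2 : Real.log (Real.exp (-t) - Real.exp (-(σ*t))) <
        Real.log (Real.exp (-(ε*t)) - Real.exp (-(σ*(ε*t)))) := by
      simp only [hL] at h; linarith
    exact (Real.log_lt_log_iff (psi_pos hσ ht) (psi_pos hσ (mul_pos hε0 ht))).mp h2


/-- Comparison of the two final-size right-hand sides f₁, f₂:
f₁ > f₂ for 0 < Z < κ/r and f₂ > f₁ for Z > κ/r, where κ = ln(1/α). -/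
theorem stmt_8 (σ ε α N₁ N₂ v r : ℝ) (hσ : 1 < σ) (hε : ε ∈ Set.Ioo (0:ℝ) 1)
    (hα : α ∈ Set.Ioo (0:ℝ) 1) (hroot : α - α ^ σ - α ^ ε + α ^ (σ * ε) = 0)
    (hN₁ : 0 < N₁) (hN₂ : 0 < N₂) (hsum : N₁ + N₂ = 1) (hv : 0 < v) (hr : 0 < r) :
    (∀ Z : ℝ, 0 < Z → Z < Real.log (1 / α) / r →
      1 - N₁ * Real.exp (-r * Z) - (N₂ - v) * Real.exp (-σ * r * Z)
          - v * Real.exp (-σ * ε * r * Z)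
        < 1 - (N₁ - v) * Real.exp (-r * Z) - N₂ * Real.exp (-σ * r * Z)
          - v * Real.exp (-ε * r * Z)) ∧
    (∀ Z : ℝ, Real.log (1 / α) / r < Z →
      1 - (N₁ - v) * Real.exp (-r * Z) - N₂ * Real.exp (-σ * r * Z)
          - v * Real.exp (-ε * r * Z)
        < 1 - N₁ * Real.exp (-r * Z) - (N₂ - v) * Real.exp (-σ * r * Z)
          - v * Real.exp (-σ * ε * r * Z)) := by
  set T := Real.log (1 / α) with hTdef
  have hα0 := hα.1
  have hα1 := hα.2
  have hT : 0 < T := Real.log_pos (by rw [lt_div_iff₀ hα0]; linarith)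
  have hlogα : Real.log α = -T := by rw [hTdef, one_div, Real.log_inv]; ring
  have e0 : Real.exp (-T) = α := by rw [← hlogα]; exact Real.exp_log hα0
  have eσ : α ^ σ = Real.exp (-(σ*T)) := by
    rw [Real.rpow_def_of_pos hα0]; congr 1; rw [hlogα]; ring
  have eε : α ^ ε = Real.exp (-(ε*T)) := by
    rw [Real.rpow_def_of_pos hα0]; congr 1; rw [hlogα]; ring
  have eσε : α ^ (σ*ε) = Real.exp (-(σ*(ε*T))) := by
    rw [Real.rpow_def_of_pos hα0]; congr 1; rw [hlogα]; ring
  rw [eσ, eε, eσε, ← e0] at hroot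
  obtain ⟨H1, H2⟩ := psi_compare hσ hε.1 hε.2 hT (by linarith)
  have e1 : ∀ Z : ℝ, -(r*Z) = -r*Z := fun Z => by ring
  have e2 : ∀ Z : ℝ, -(σ*(r*Z)) = -σ*r*Z := fun Z => by ring
  have e3 : ∀ Z : ℝ, -(ε*(r*Z)) = -ε*r*Z := fun Z => by ring
  have e4 : ∀ Z : ℝ, -(σ*(ε*(r*Z))) = -σ*ε*r*Z := fun Z => by ring
  constructor
  · intro Z hZ hZT
    have ht : 0 < r * Z := mul_pos hr hZ
    have htT : r * Z < T := by
      have := (lt_div_iff₀ hr).mp hZT; linarith [this]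
    have hpsi := H1 (r*Z) ht htT
    rw [e1, e2, e3, e4] at hpsi
    have := mul_lt_mul_of_pos_left hpsi hv
    linarith
  · intro Z hTZ
    have hZ : 0 < Z := by
      have : 0 < T / r := div_pos hT hr
      linarith
    have htT : T < r * Z := by
      have := (div_lt_iff₀ hr).mp hTZ; linarith [this]
    have hpsi := H2 (r*Z) htT
    rw [e1, e2, e3, e4] at hpsi
    have := mul_lt_mul_of_pos_left hpsi hv
    linarith
end

section
/- For σ > 1 and ε ∈ (0,1), if x ∈ (0,1) satisfies x^{(σ−1)ε} = (σ−ε)/((1−σε)σ) with 1 − σε > 0, then σ² < 1, a contradiction; hence the equation (ε−1)(ε−σ)x^{ε−σ−1} = (σε−1)σ(ε−1)x^{σ(ε−1)−1} has no solution x ∈ (0,1). -/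
/-- Key contradiction step: for σ > 1, ε ∈ (0,1), no x ∈ (0,1) can satisfy
x^{(σ−1)ε} = (σ−ε)/((1−σε)σ) when 1 − σε > 0 (it would force σ² < 1);
hence (ε−1)(ε−σ)x^{ε−σ−1} = (σε−1)σ(ε−1)x^{σ(ε−1)−1} has no solution in (0,1). -/
theorem stmt_9 (σ ε : ℝ) (hσ : 1 < σ) (hε : ε ∈ Set.Ioo (0:ℝ) 1) :
    (∀ x ∈ Set.Ioo (0:ℝ) 1, 0 < 1 - σ * ε →
      x ^ ((σ - 1) * ε) = (σ - ε) / ((1 - σ * ε) * σ) → False) ∧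
    (∀ x ∈ Set.Ioo (0:ℝ) 1,
      (ε - 1) * (ε - σ) * x ^ (ε - σ - 1)
        ≠ (σ * ε - 1) * σ * (ε - 1) * x ^ (σ * (ε - 1) - 1)) := by
  obtain ⟨hε0, hε1⟩ := hε
  constructor
  · rintro x ⟨hx0, hx1⟩ h1 h2
    have hexp : 0 < (σ - 1) * ε := by nlinarith
    have hlt : x ^ ((σ - 1) * ε) < 1 := Real.rpow_lt_one hx0.le hx1 hexp
    rw [h2] at hlt
    have hden : 0 < (1 - σ * ε) * σ := by nlinarith
    rw [div_lt_one hden] at hlt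
    nlinarith
  · rintro x ⟨hx0, hx1⟩ heq
    have hA : 0 < x ^ (ε - σ - 1) := Real.rpow_pos_of_pos hx0 _
    have hB : 0 < x ^ ((σ - 1) * ε) := Real.rpow_pos_of_pos hx0 _
    have hB1 : x ^ ((σ - 1) * ε) < 1 :=
      Real.rpow_lt_one hx0.le hx1 (by nlinarith)
    have hsplit : x ^ (σ * (ε - 1) - 1) = x ^ (ε - σ - 1) * x ^ ((σ - 1) * ε) := by
      rw [← Real.rpow_add hx0]; ring_nf
    rw [hsplit] at heq
    have hcoef : 0 < (ε - 1) * (ε - σ) := by nlinarith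
    have hσε : σ * ε < 1 := by
      by_contra h
      push_neg at h
      have hC0 : (σ * ε - 1) * σ * (ε - 1) ≤ 0 :=
        mul_nonpos_of_nonneg_of_nonpos (mul_nonneg (by linarith) (by linarith)) (by linarith)
      nlinarith [mul_pos hcoef hA, mul_pos hA hB,
        mul_nonpos_of_nonpos_of_nonneg hC0 (mul_pos hA hB).le]
    have hC : 0 < (σ * ε - 1) * σ * (ε - 1) := by nlinarith
    -- cancel A and use B < 1
    have hcancel : (ε - 1) * (ε - σ) = (σ * ε - 1) * σ * (ε - 1) * x ^ ((σ - 1) * ε) := by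
      have h' : ((ε - 1) * (ε - σ)) * x ^ (ε - σ - 1)
          = ((σ * ε - 1) * σ * (ε - 1) * x ^ ((σ - 1) * ε)) * x ^ (ε - σ - 1) := by
        linear_combination heq
      exact mul_right_cancel₀ (ne_of_gt hA) h'
    nlinarith [mul_lt_of_lt_one_right hC hB1,
      mul_pos (mul_pos hε0 (by linarith : (0:ℝ) < 1 - ε))
        (by nlinarith : (0:ℝ) < σ ^ 2 - 1)]
end

section
/- Let N₁=N₂=1/2, σ > 1, ε ∈ (0,1), 0 < v < 1/2, and let α ∈ (0,1) be the unique root of α − α^σ − α^ε + α^{σε} = 0 with κ = ln(1/α). Define r* = κ / (1 − (1/2 − v)α − (1/2)α^σ − vα^ε). Then for r = r*, the function ζ(v₁) defined implicitly by 1 − (1/2 − v₁)e^{−r*ζ} − (1/2 − v + v₁)e^{−σr*ζ} − v₁e^{−εr*ζ} − (v−v₁)e^{−σεr*ζ} = ζ with ζ ∈ (0,1) is constant: ζ(v₁) = κ/r* for all v₁ ∈ [0, v]. -/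
private lemma expHasDeriv (c a : ℝ) (t : ℝ) :
    HasDerivAt (fun t => c * Real.exp (a * t)) (c * a * Real.exp (a * t)) t := by
  have h : HasDerivAt (fun t : ℝ => a * t) a t := by
    simpa using (hasDerivAt_id t).const_mul a
  have := h.exp.const_mul c
  exact this.congr_deriv (by ring)

private lemma myConcave (c1 c2 c3 c4 a1 a2 a3 a4 : ℝ) (hc1 : 0 < c1) (ha1 : a1 ≠ 0)
    (hc2 : 0 ≤ c2) (hc3 : 0 ≤ c3) (hc4 : 0 ≤ c4) :
    StrictConcaveOn ℝ Set.univ (fun t => 1 - c1 * Real.exp (a1 * t) - c2 * Real.exp (a2 * t)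
      - c3 * Real.exp (a3 * t) - c4 * Real.exp (a4 * t) - t) := by
  set f : ℝ → ℝ := fun t => 1 - c1 * Real.exp (a1 * t) - c2 * Real.exp (a2 * t)
      - c3 * Real.exp (a3 * t) - c4 * Real.exp (a4 * t) - t with hf
  set f1 : ℝ → ℝ := fun t => -(c1 * a1 * Real.exp (a1 * t)) - c2 * a2 * Real.exp (a2 * t)
      - c3 * a3 * Real.exp (a3 * t) - c4 * a4 * Real.exp (a4 * t) - 1 with hf1
  have hd : ∀ t, HasDerivAt f (f1 t) t := by
    intro t
    have h1 := expHasDeriv c1 a1 t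
    have h2 := expHasDeriv c2 a2 t
    have h3 := expHasDeriv c3 a3 t
    have h4 := expHasDeriv c4 a4 t
    have := ((((((hasDerivAt_const t (1:ℝ)).sub h1).sub h2).sub h3).sub h4).sub
      (hasDerivAt_id t))
    exact this.congr_deriv (by simp only [hf1]; ring)
  have hd2 : ∀ t, HasDerivAt f1 (-(c1 * a1 * a1 * Real.exp (a1 * t))
      - c2 * a2 * a2 * Real.exp (a2 * t) - c3 * a3 * a3 * Real.exp (a3 * t)
      - c4 * a4 * a4 * Real.exp (a4 * t)) t := by
    intro t
    have h1 := expHasDeriv (c1 * a1) a1 t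
    have h2 := expHasDeriv (c2 * a2) a2 t
    have h3 := expHasDeriv (c3 * a3) a3 t
    have h4 := expHasDeriv (c4 * a4) a4 t
    have := ((((h1.neg.sub h2).sub h3).sub h4).sub (hasDerivAt_const t (1:ℝ)))
    exact this.congr_deriv (by ring)
  have hderiv : deriv f = f1 := funext fun t => (hd t).deriv
  apply strictConcaveOn_of_deriv2_neg (convex_univ) (by fun_prop)
  intro x _
  have : deriv^[2] f x = deriv (deriv f) x := rfl
  rw [this, hderiv, (hd2 x).deriv]
  have ha1sq : 0 < a1 * a1 := mul_self_pos.mpr ha1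
  have e1 : 0 < c1 * a1 * a1 * Real.exp (a1 * x) := by
    nlinarith [mul_pos (mul_pos hc1 ha1sq) (Real.exp_pos (a1 * x))]
  nlinarith [e1,
    mul_nonneg (mul_nonneg hc2 (mul_self_nonneg a2)) (Real.exp_pos (a2*x)).le,
    mul_nonneg (mul_nonneg hc3 (mul_self_nonneg a3)) (Real.exp_pos (a3*x)).le,
    mul_nonneg (mul_nonneg hc4 (mul_self_nonneg a4)) (Real.exp_pos (a4*x)).le]

private lemma fixptUnique {f : ℝ → ℝ} (hf : StrictConcaveOn ℝ Set.univ f) (h0 : f 0 = 0)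
    {a b : ℝ} (ha : 0 < a) (hb : 0 < b) (hfa : f a = 0) (hfb : f b = 0) : a = b := by
  have key : ∀ x y : ℝ, 0 < x → 0 < y → f x = 0 → f y = 0 → x < y → False := by
    intro x y hx hy hfx hfy hxy
    have h1 : (0:ℝ) < 1 - x / y := by
      have : x / y < 1 := (div_lt_one hy).2 hxy
      linarith
    have h2 : (0:ℝ) < x / y := div_pos hx hy
    have := hf.2 (Set.mem_univ (0:ℝ)) (Set.mem_univ y) (by linarith : (0:ℝ) ≠ y) h1 h2
      (by ring)
    rw [smul_eq_mul, smul_eq_mul, smul_eq_mul, smul_eq_mul, h0, hfy,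
      show (1 - x / y) * 0 + x / y * y = x by field_simp; ring] at this
    rw [hfx] at this
    simp at this
  rcases lt_trichotomy a b with h | h | h
  · exact absurd (key a b ha hb hfa hfb h) (by simp)
  · exact h
  · exact absurd (key b a hb ha hfb hfa h) (by simp)

/-- At r = r*, the final size ζ(v₁) is constant, equal to κ/r*, for all
allocations v₁ ∈ [0,v] (equal group sizes N₁ = N₂ = 1/2). -/
theorem stmt_13 (σ ε v α κ rstar : ℝ) (hσ : 1 < σ) (hε : ε ∈ Set.Ioo (0:ℝ) 1)
    (hv : 0 < v) (hv2 : v < 1 / 2)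
    (hα : α ∈ Set.Ioo (0:ℝ) 1) (hroot : α - α ^ σ - α ^ ε + α ^ (σ * ε) = 0)
    (huniq : ∀ x ∈ Set.Ioo (0:ℝ) 1, x - x ^ σ - x ^ ε + x ^ (σ * ε) = 0 → x = α)
    (hκ : κ = Real.log (1 / α))
    (hrstar : rstar = κ / (1 - (1 / 2 - v) * α - (1 / 2) * α ^ σ - v * α ^ ε))
    (ζ : ℝ → ℝ)
    (hζ : ∀ v₁ ∈ Set.Icc 0 v, ζ v₁ ∈ Set.Ioo (0:ℝ) 1 ∧
      1 - (1 / 2 - v₁) * Real.exp (-rstar * ζ v₁)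
        - (1 / 2 - v + v₁) * Real.exp (-σ * rstar * ζ v₁)
        - v₁ * Real.exp (-ε * rstar * ζ v₁)
        - (v - v₁) * Real.exp (-σ * ε * rstar * ζ v₁) = ζ v₁) :
    ∀ v₁ ∈ Set.Icc 0 v, ζ v₁ = κ / rstar := by
  obtain ⟨hα0, hα1⟩ := hα
  obtain ⟨hε0, hε1⟩ := hε
  intro v₁ hv₁
  obtain ⟨hv₁0, hv₁v⟩ := hv₁
  obtain ⟨⟨hz0, hz1⟩, hzeq⟩ := hζ v₁ ⟨hv₁0, hv₁v⟩
  -- basic positivity facts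
  have hκpos : 0 < κ := by
    rw [hκ]
    apply Real.log_pos
    rw [lt_div_iff₀ hα0]; linarith
  have hαs : α ^ σ < 1 := Real.rpow_lt_one hα0.le hα1 (by linarith)
  have hαe : α ^ ε < 1 := Real.rpow_lt_one hα0.le hα1 hε0
  have hαs0 : 0 < α ^ σ := Real.rpow_pos_of_pos hα0 σ
  have hαe0 : 0 < α ^ ε := Real.rpow_pos_of_pos hα0 ε
  have hDpos : 0 < 1 - (1 / 2 - v) * α - (1 / 2) * α ^ σ - v * α ^ ε := by
    nlinarith
  have hrpos : 0 < rstar := by rw [hrstar]; positivity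
  -- the candidate fixed point k = κ / rstar equals the denominator D
  set k : ℝ := κ / rstar with hk
  have hkD : k = 1 - (1 / 2 - v) * α - (1 / 2) * α ^ σ - v * α ^ ε := by
    rw [hk, hrstar]
    field_simp
  have hkpos : 0 < k := div_pos hκpos hrpos
  have hrk : rstar * k = κ := by
    rw [hk]; field_simp
  have hlogα : -κ = Real.log α := by
    rw [hκ, one_div, Real.log_inv]; ring
  -- exponential values at t = k
  have he1 : Real.exp (-rstar * k) = α := by
    rw [show -rstar * k = -κ by rw [← hrk]; ring, hlogα, Real.exp_log hα0]
  have he2 : Real.exp (-σ * rstar * k) = α ^ σ := by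
    rw [show -σ * rstar * k = Real.log α * σ by rw [← hlogα, ← hrk]; ring,
      ← Real.rpow_def_of_pos hα0]
  have he3 : Real.exp (-ε * rstar * k) = α ^ ε := by
    rw [show -ε * rstar * k = Real.log α * ε by rw [← hlogα, ← hrk]; ring,
      ← Real.rpow_def_of_pos hα0]
  have he4 : Real.exp (-σ * ε * rstar * k) = α ^ (σ * ε) := by
    rw [show -σ * ε * rstar * k = Real.log α * (σ * ε) by rw [← hlogα, ← hrk]; ring,
      ← Real.rpow_def_of_pos hα0]
  -- the fixed point function
  set f : ℝ → ℝ := fun t => 1 - (1 / 2 - v₁) * Real.exp (-rstar * t)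
      - (1 / 2 - v + v₁) * Real.exp (-σ * rstar * t)
      - v₁ * Real.exp (-ε * rstar * t)
      - (v - v₁) * Real.exp (-σ * ε * rstar * t) - t with hf
  have hconc : StrictConcaveOn ℝ Set.univ f :=
    myConcave (1 / 2 - v₁) (1 / 2 - v + v₁) v₁ (v - v₁)
      (-rstar) (-σ * rstar) (-ε * rstar) (-σ * ε * rstar)
      (by linarith) (neg_ne_zero.mpr (ne_of_gt hrpos)) (by linarith) (by linarith)
      (by linarith)
  have hf0 : f 0 = 0 := by
    show 1 - (1 / 2 - v₁) * Real.exp (-rstar * 0)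
      - (1 / 2 - v + v₁) * Real.exp (-σ * rstar * 0)
      - v₁ * Real.exp (-ε * rstar * 0)
      - (v - v₁) * Real.exp (-σ * ε * rstar * 0) - 0 = 0
    simp only [mul_zero, Real.exp_zero, mul_one]
    ring
  have hfz : f (ζ v₁) = 0 := by
    show 1 - (1 / 2 - v₁) * Real.exp (-rstar * ζ v₁)
      - (1 / 2 - v + v₁) * Real.exp (-σ * rstar * ζ v₁)
      - v₁ * Real.exp (-ε * rstar * ζ v₁)
      - (v - v₁) * Real.exp (-σ * ε * rstar * ζ v₁) - ζ v₁ = 0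
    linarith [hzeq]
  have hfk : f k = 0 := by
    show 1 - (1 / 2 - v₁) * Real.exp (-rstar * k)
      - (1 / 2 - v + v₁) * Real.exp (-σ * rstar * k)
      - v₁ * Real.exp (-ε * rstar * k)
      - (v - v₁) * Real.exp (-σ * ε * rstar * k) - k = 0
    rw [he1, he2, he3, he4, hkD]
    linear_combination (v₁ - v) * hroot
  exact fixptUnique hconc hf0 hz0 hkpos hfz hfk
end

section
/- Let σ > 1, ε ∈ (0,1), N₁+N₂=1, 0 < v < min(N₁,N₂), and let α ∈ (0,1) solve α − α^σ − α^ε + α^{σε} = 0, κ = ln(1/α), r* = κ/(1 − (N₁−v)α − N₂α^σ − vα^ε). If v₁* ∈ (0,v) is a critical point of ζ (ζ′(v₁*) = 0), where ζ(v₁) is the final size under allocation (v₁, v−v₁) and r > r₂ is the transmission ratio, then rζ(v₁*) = κ and r = r*. -/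
/-- If v₁* ∈ (0,v) is a critical point of the final size ζ under allocation
(v₁, v−v₁) at transmission ratio r > r₂, then rζ(v₁*) = κ and r = r*. -/
theorem stmt_14 (σ ε N₁ N₂ v α κ rstar r : ℝ) (hσ : 1 < σ)
    (hε : ε ∈ Set.Ioo (0:ℝ) 1) (hsum : N₁ + N₂ = 1)
    (hN₁ : 0 < N₁) (hN₂ : 0 < N₂) (hv : 0 < v) (hvmin : v < min N₁ N₂)
    (hα : α ∈ Set.Ioo (0:ℝ) 1) (hroot : α - α ^ σ - α ^ ε + α ^ (σ * ε) = 0)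
    (huniq : ∀ x ∈ Set.Ioo (0:ℝ) 1, x - x ^ σ - x ^ ε + x ^ (σ * ε) = 0 → x = α)
    (hκ : κ = Real.log (1 / α))
    (hrstar : rstar = κ / (1 - (N₁ - v) * α - N₂ * α ^ σ - v * α ^ ε))
    (hr : 1 / (N₁ + σ * (N₂ - v) + σ * ε * v) < r)
    (ζ : ℝ → ℝ) (hdiff : Differentiable ℝ ζ)
    (hζ : ∀ v₁ ∈ Set.Icc 0 v, ζ v₁ ∈ Set.Ioo (0:ℝ) 1 ∧
      1 - (N₁ - v₁) * Real.exp (-r * ζ v₁)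
        - (N₂ - v + v₁) * Real.exp (-σ * r * ζ v₁)
        - v₁ * Real.exp (-ε * r * ζ v₁)
        - (v - v₁) * Real.exp (-σ * ε * r * ζ v₁) = ζ v₁)
    (v₁star : ℝ) (hv₁star : v₁star ∈ Set.Ioo 0 v)
    (hcrit : deriv ζ v₁star = 0) :
    r * ζ v₁star = κ ∧ r = rstar := by
  obtain ⟨hv₁, hv₂⟩ := hv₁star
  obtain ⟨⟨hc0, hc1⟩, heq⟩ := hζ v₁star ⟨hv₁.le, hv₂.le⟩
  have hσ0 : (0:ℝ) < σ := lt_trans one_pos hσ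
  have hvN₂ : v < N₂ := lt_of_lt_of_le hvmin (min_le_right _ _)
  have hden : 0 < N₁ + σ * (N₂ - v) + σ * ε * v := by
    have h1 : 0 < σ * (N₂ - v) := mul_pos hσ0 (sub_pos.mpr hvN₂)
    have h2 : 0 < σ * ε * v := mul_pos (mul_pos hσ0 hε.1) hv
    linarith
  have hr0 : 0 < r := lt_trans (one_div_pos.mpr hden) hr
  have hrc : 0 < r * ζ v₁star := mul_pos hr0 hc0
  -- derivative of ζ at v₁star is 0
  have hζ' : HasDerivAt ζ 0 v₁star := hcrit ▸ (hdiff v₁star).hasDerivAt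
  have h1 : HasDerivAt (fun x => Real.exp (-r * ζ x)) 0 v₁star := by
    simpa using (hζ'.const_mul (-r)).exp
  have h2 : HasDerivAt (fun x => Real.exp (-σ * r * ζ x)) 0 v₁star := by
    simpa using (hζ'.const_mul (-σ * r)).exp
  have h3 : HasDerivAt (fun x => Real.exp (-ε * r * ζ x)) 0 v₁star := by
    simpa using (hζ'.const_mul (-ε * r)).exp
  have h4 : HasDerivAt (fun x => Real.exp (-σ * ε * r * ζ x)) 0 v₁star := by
    simpa using (hζ'.const_mul (-σ * ε * r)).exp
  have hA : HasDerivAt (fun x => (N₁ - x) * Real.exp (-r * ζ x))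
      (-Real.exp (-r * ζ v₁star)) v₁star := by
    simpa using ((hasDerivAt_id v₁star).const_sub N₁).fun_mul h1
  have hB : HasDerivAt (fun x => (N₂ - v + x) * Real.exp (-σ * r * ζ x))
      (Real.exp (-σ * r * ζ v₁star)) v₁star := by
    simpa using ((hasDerivAt_id v₁star).const_add (N₂ - v)).fun_mul h2
  have hC : HasDerivAt (fun x => x * Real.exp (-ε * r * ζ x))
      (Real.exp (-ε * r * ζ v₁star)) v₁star := by
    simpa using (hasDerivAt_id v₁star).fun_mul h3
  have hD : HasDerivAt (fun x => (v - x) * Real.exp (-σ * ε * r * ζ x))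
      (-Real.exp (-σ * ε * r * ζ v₁star)) v₁star := by
    simpa using ((hasDerivAt_id v₁star).const_sub v).fun_mul h4
  have hf : HasDerivAt (fun x => 1 - (N₁ - x) * Real.exp (-r * ζ x)
      - (N₂ - v + x) * Real.exp (-σ * r * ζ x)
      - x * Real.exp (-ε * r * ζ x)
      - (v - x) * Real.exp (-σ * ε * r * ζ x))
      (Real.exp (-r * ζ v₁star) - Real.exp (-σ * r * ζ v₁star)
        - Real.exp (-ε * r * ζ v₁star) + Real.exp (-σ * ε * r * ζ v₁star)) v₁star := by
    have h0 : HasDerivAt (fun _ : ℝ => (1:ℝ)) 0 v₁star := hasDerivAt_const _ _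
    have := (((h0.fun_sub hA).fun_sub hB).fun_sub hC).fun_sub hD
    refine this.congr_deriv ?_
    ring
  have hev : ζ =ᶠ[nhds v₁star] (fun x => 1 - (N₁ - x) * Real.exp (-r * ζ x)
      - (N₂ - v + x) * Real.exp (-σ * r * ζ x)
      - x * Real.exp (-ε * r * ζ x)
      - (v - x) * Real.exp (-σ * ε * r * ζ x)) := by
    filter_upwards [isOpen_Ioo.mem_nhds (⟨hv₁, hv₂⟩ : v₁star ∈ Set.Ioo 0 v)] with x hx
    exact ((hζ x ⟨hx.1.le, hx.2.le⟩).2).symm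
  have hζ'' : HasDerivAt ζ (Real.exp (-r * ζ v₁star) - Real.exp (-σ * r * ζ v₁star)
      - Real.exp (-ε * r * ζ v₁star) + Real.exp (-σ * ε * r * ζ v₁star)) v₁star :=
    hf.congr_of_eventuallyEq hev
  have hD0 : Real.exp (-r * ζ v₁star) - Real.exp (-σ * r * ζ v₁star)
      - Real.exp (-ε * r * ζ v₁star) + Real.exp (-σ * ε * r * ζ v₁star) = 0 :=
    (hζ'.unique hζ'').symm
  -- let X = exp(-r ζ*)
  set X := Real.exp (-r * ζ v₁star) with hXdef
  have hXpos : 0 < X := Real.exp_pos _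
  have hXlt1 : X < 1 := by
    rw [hXdef]
    apply Real.exp_lt_one_iff.mpr
    nlinarith
  have hXσ : Real.exp (-σ * r * ζ v₁star) = X ^ σ := by
    rw [hXdef, ← Real.exp_mul]
    ring_nf
  have hXε : Real.exp (-ε * r * ζ v₁star) = X ^ ε := by
    rw [hXdef, ← Real.exp_mul]
    ring_nf
  have hXσε : Real.exp (-σ * ε * r * ζ v₁star) = X ^ (σ * ε) := by
    rw [hXdef, ← Real.exp_mul]
    ring_nf
  have hXroot : X - X ^ σ - X ^ ε + X ^ (σ * ε) = 0 := by
    rw [← hXσ, ← hXε, ← hXσε]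
    exact hD0
  have hXα : X = α := huniq X ⟨hXpos, hXlt1⟩ hXroot
  have hκ' : κ = -Real.log α := by
    rw [hκ, one_div, Real.log_inv]
  have hlog : Real.log X = -r * ζ v₁star := by rw [hXdef, Real.log_exp]
  have hpart1 : r * ζ v₁star = κ := by
    rw [hκ']
    rw [hXα] at hlog
    linarith
  refine ⟨hpart1, ?_⟩
  rw [hXα] at heq hXσ hXε hXσε
  rw [hXσ, hXε, hXσε] at heq
  have hζval : ζ v₁star = 1 - (N₁ - v) * α - N₂ * α ^ σ - v * α ^ ε := by
    linear_combination -heq - (v - v₁star) * hroot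
  rw [hrstar, ← hζval, ← hpart1, mul_div_assoc, div_self (ne_of_gt hc0), mul_one]
end

section
/- Let σ > 1, ε ∈ (0,1), and α ∈ (0,1) the root of α − α^σ − α^ε + α^{σε} = 0. Then the transition value R₀* = (N₁ + N₂σ)·ln(1/α) / (1 − N₁α − N₂α^σ − v(α^ε − α)) satisfies R₀* → ∞ as ε → 0⁺ (with σ, N₁, N₂, v fixed, N₁+N₂=1, 0 < v < min(N₁,N₂)). -/
open Filter Real Set Topology

/-- Key quantitative bound: if `a ∈ (0,1)` is a root of
`a - a^σ - a^ε + a^(σε) = 0` with `σ > 1`, `ε ∈ (0,1)`, then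
`min 1 (σ-1) * a^2 ≤ ε * (σ-1)`. -/
lemma stmt_17_aux (σ ε a : ℝ) (hσ : 1 < σ) (hε : ε ∈ Set.Ioo (0:ℝ) 1)
    (ha : a ∈ Set.Ioo (0:ℝ) 1)
    (heq : a - a ^ σ - a ^ ε + a ^ (σ * ε) = 0) :
    min 1 (σ - 1) * a ^ 2 ≤ ε * (σ - 1) := by
  obtain ⟨ha0, ha1⟩ := ha
  obtain ⟨hε0, hε1⟩ := hε
  set t := σ - 1 with ht
  have ht0 : 0 < t := by simp [ht]; linarith
  set β : ℝ := a ^ t with hβdef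
  have hβ0 : 0 < β := Real.rpow_pos_of_pos ha0 _
  have hβ1 : β < 1 := Real.rpow_lt_one ha0.le ha1 ht0
  -- rewrite the powers
  have h1 : a ^ σ = a * β := by
    rw [hβdef, show σ = 1 + t by ring, Real.rpow_add ha0, Real.rpow_one]
  have h2 : a ^ (σ * ε) = a ^ ε * β ^ ε := by
    have : σ * ε = ε + t * ε := by ring
    rw [this, Real.rpow_add ha0, hβdef, ← Real.rpow_mul ha0.le]
  have heq' : a * (1 - β) = a ^ ε * (1 - β ^ ε) := by
    rw [h1, h2] at heq; ring_nf at heq ⊢; linarith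
  -- upper bound on RHS
  have haε1 : a ^ ε ≤ 1 := Real.rpow_le_one ha0.le ha1.le hε0.le
  have hβε1 : β ^ ε ≤ 1 := Real.rpow_le_one hβ0.le hβ1.le hε0.le
  have hupper : 1 - β ^ ε ≤ ε * (t * (-Real.log a)) := by
    have hexp : β ^ ε = Real.exp (ε * Real.log β) := by
      rw [Real.rpow_def_of_pos hβ0, mul_comm]
    have hb : ε * Real.log β + 1 ≤ Real.exp (ε * Real.log β) :=
      Real.add_one_le_exp _
    have hlogβ : Real.log β = t * Real.log a := Real.log_rpow ha0 t
    rw [hexp]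
    nlinarith [hb, hlogβ]
  have hloga : a * (-Real.log a) ≤ 1 - a := by
    have h := Real.log_le_sub_one_of_pos (show (0:ℝ) < 1 / a by positivity)
    rw [one_div, Real.log_inv] at h
    have h2 := mul_le_mul_of_nonneg_left h ha0.le
    have h3 : a * a⁻¹ = 1 := mul_inv_cancel₀ ha0.ne'
    nlinarith
  -- lower bound on LHS
  have hlower : min 1 t * (1 - a) ≤ 1 - β := by
    rcases le_total 1 t with h | h
    · have : β ≤ a := by
        calc β = a ^ t := rfl
        _ ≤ a ^ (1:ℝ) := Real.rpow_le_rpow_of_exponent_ge ha0 ha1.le h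
        _ = a := Real.rpow_one a
      have : min 1 t = 1 := min_eq_left h
      rw [this]
      have : a ^ t ≤ a ^ (1:ℝ) := Real.rpow_le_rpow_of_exponent_ge ha0 ha1.le h
      rw [Real.rpow_one] at this
      simp [hβdef]; linarith
    · have hm : min 1 t = t := min_eq_right h
      rw [hm]
      have hgm : (1:ℝ) ^ (1 - t) * a ^ t ≤ (1 - t) * 1 + t * a :=
        Real.geom_mean_le_arith_mean2_weighted (by linarith) ht0.le
          zero_le_one ha0.le (by ring)
      rw [Real.one_rpow, one_mul] at hgm
      simp only [hβdef]; nlinarith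
  -- combine
  have h1a : 0 < 1 - a := by linarith
  have hmin0 : 0 < min 1 t := lt_min one_pos ht0
  have h3 : a * (1 - β) ≤ 1 - β ^ ε := by
    calc a * (1 - β) = a ^ ε * (1 - β ^ ε) := heq'
    _ ≤ 1 * (1 - β ^ ε) := mul_le_mul_of_nonneg_right haε1 (by linarith)
    _ = 1 - β ^ ε := one_mul _
  -- a * (a * (1-β)) ≤ a * (1 - β^ε) ≤ a * (ε t (-log a)) = ε t (a (-log a)) ≤ ε t (1-a)
  have h4 : a * (a * (1 - β)) ≤ ε * t * (1 - a) := by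
    have k1 : a * (a * (1 - β)) ≤ a * (1 - β ^ ε) :=
      mul_le_mul_of_nonneg_left h3 ha0.le
    have k2 : a * (1 - β ^ ε) ≤ a * (ε * (t * (-Real.log a))) :=
      mul_le_mul_of_nonneg_left hupper ha0.le
    have k3 : ε * t * (a * (-Real.log a)) ≤ ε * t * (1 - a) :=
      mul_le_mul_of_nonneg_left hloga (by positivity)
    nlinarith
  have h5 : min 1 t * (1 - a) * (a * a) ≤ a * (a * (1 - β)) := by
    have := mul_le_mul_of_nonneg_right hlower (mul_pos ha0 ha0).le
    nlinarith
  nlinarith [mul_pos hmin0 h1a]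

/-- The transition value R₀* tends to infinity as the vaccine leakiness
ε → 0⁺ (perfect vaccine limit), where α = α(ε) is the root in (0,1) of
α − α^σ − α^ε + α^{σε} = 0. -/
theorem stmt_17 (σ N₁ N₂ v : ℝ) (hσ : 1 < σ) (hsum : N₁ + N₂ = 1)
    (hN₁ : 0 < N₁) (hN₂ : 0 < N₂) (hv : 0 < v) (hvmin : v < min N₁ N₂)
    (α : ℝ → ℝ)
    (hα : ∀ ε ∈ Set.Ioo (0:ℝ) 1, α ε ∈ Set.Ioo (0:ℝ) 1 ∧
      α ε - α ε ^ σ - α ε ^ ε + α ε ^ (σ * ε) = 0) :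
    Filter.Tendsto (fun ε => (N₁ + N₂ * σ) * Real.log (1 / α ε) /
        (1 - N₁ * α ε - N₂ * α ε ^ σ - v * (α ε ^ ε - α ε)))
      (nhdsWithin 0 (Set.Ioi 0)) Filter.atTop := by
  have hmemIoo : Set.Ioo (0:ℝ) 1 ∈ 𝓝[>] (0:ℝ) :=
    Ioo_mem_nhdsGT_of_mem (by constructor <;> norm_num)
  set c := min 1 (σ - 1) with hc
  have hc0 : 0 < c := lt_min one_pos (by linarith)
  -- α ε → 0
  have hα0 : Filter.Tendsto α (𝓝[>] (0:ℝ)) (𝓝 0) := by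
    have hsqrt : Filter.Tendsto (fun ε : ℝ => Real.sqrt (ε * (σ - 1) / c))
        (𝓝[>] (0:ℝ)) (𝓝 0) := by
      have : Filter.Tendsto (fun ε : ℝ => ε * (σ - 1) / c) (𝓝[>] (0:ℝ)) (𝓝 0) := by
        have hcont : Continuous fun ε : ℝ => ε * (σ - 1) / c := by continuity
        have := hcont.tendsto 0
        simp only [zero_mul, zero_div] at this
        exact this.mono_left nhdsWithin_le_nhds
      simpa [Function.comp_def] using (Real.continuous_sqrt.tendsto 0).comp this
    apply tendsto_of_tendsto_of_tendsto_of_le_of_le' tendsto_const_nhds hsqrt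
    · filter_upwards [hmemIoo] with ε hε
      exact (hα ε hε).1.1.le
    · filter_upwards [hmemIoo] with ε hε
      have hb := stmt_17_aux σ ε (α ε) hσ hε (hα ε hε).1 (hα ε hε).2
      have ha0 := (hα ε hε).1.1
      have hsq : (α ε) ^ 2 ≤ ε * (σ - 1) / c := by
        rw [le_div_iff₀ hc0]; nlinarith
      calc α ε = Real.sqrt ((α ε) ^ 2) := (Real.sqrt_sq ha0.le).symm
      _ ≤ Real.sqrt (ε * (σ - 1) / c) := Real.sqrt_le_sqrt hsq
  -- log (1 / α ε) → ∞
  have hαpos : Filter.Tendsto α (𝓝[>] (0:ℝ)) (𝓝[>] 0) := by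
    rw [tendsto_nhdsWithin_iff]
    refine ⟨hα0, ?_⟩
    filter_upwards [hmemIoo] with ε hε
    exact (hα ε hε).1.1
  have hlog : Filter.Tendsto (fun ε => Real.log (1 / α ε)) (𝓝[>] (0:ℝ)) atTop := by
    have := tendsto_neg_atBot_atTop.comp
      (Real.tendsto_log_nhdsGT_zero.comp hαpos)
    have h2 : (fun ε => Real.log (1 / α ε)) = (Neg.neg ∘ Real.log ∘ α) := by
      funext x; simp [one_div, Real.log_inv]
    rw [h2]; exact this
  have hA : 0 < N₁ + N₂ * σ := by nlinarith
  have hg : Filter.Tendsto (fun ε => (N₁ + N₂ * σ) * Real.log (1 / α ε))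
      (𝓝[>] (0:ℝ)) atTop := Filter.Tendsto.const_mul_atTop hA hlog
  apply tendsto_atTop_mono' _ _ hg
  have hv₁ : v < N₁ := lt_of_lt_of_le hvmin (min_le_left _ _)
  have hv₂ : v < N₂ := lt_of_lt_of_le hvmin (min_le_right _ _)
  filter_upwards [hmemIoo, hα0.eventually_lt_const (show (0:ℝ) < 1/4 by norm_num),
    hg.eventually_ge_atTop 0] with ε hε hsmall hg0
  obtain ⟨⟨ha0, ha1⟩, -⟩ := hα ε hε
  set a := α ε
  have haσ : a ^ σ ≤ a := by
    have := Real.rpow_le_rpow_of_exponent_ge ha0 ha1.le hσ.le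
    rwa [Real.rpow_one] at this
  have haε : a ≤ a ^ ε := by
    have := Real.rpow_le_rpow_of_exponent_ge ha0 ha1.le hε.2.le
    rwa [Real.rpow_one] at this
  have haε1 : a ^ ε ≤ 1 := Real.rpow_le_one ha0.le ha1.le hε.1.le
  have haσ0 : 0 < a ^ σ := Real.rpow_pos_of_pos ha0 _
  set D := 1 - N₁ * a - N₂ * a ^ σ - v * (a ^ ε - a) with hD
  have hD1 : D ≤ 1 := by
    have h1 : 0 ≤ v * (a ^ ε - a) := mul_nonneg hv.le (by linarith)
    nlinarith
  have hDpos : 0 < D := by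
    have h1 : v * (a ^ ε - a) ≤ v * 1 := by
      apply mul_le_mul_of_nonneg_left _ hv.le; linarith
    nlinarith
  show (N₁ + N₂ * σ) * Real.log (1 / a) ≤
    (N₁ + N₂ * σ) * Real.log (1 / a) / D
  rw [le_div_iff₀ hDpos]
  exact mul_le_of_le_one_right hg0 hD1
end
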